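/- Let G be a finite simple graph with an edge uv, and let G' be the graph obtained from G by subdividing uv, i.e. deleting the edge uv and adding a new vertex w together with the edges uw and wv. Then the cutwidth of G' is at most the cutwidth of G. -/
import Mathlib


noncomputable section

/-- The cutwidth of a finite simple graph: the minimum over all linear orderings
(cut decompositions) `f : V ≃ Fin |V|` of the vertex set of the maximum number
of edges crossing a cut, where an edge `{u, v}` crosses the `i`-th cut if
`f u ≤ i < f v`. -/
def cutwidth {V : Type*} [Finite V] (G : SimpleGraph V) : ℕ :=
  sInf {w | ∃ f : V ≃ Fin (Nat.card V), ∀ i : ℕ,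
    {e | e ∈ G.edgeSet ∧ ∃ u v, e = s(u, v) ∧ (f u : ℕ) ≤ i ∧ i < (f v : ℕ)}.ncard ≤ w}

/-- The graph obtained from `G` by subdividing the edge `uv`: delete the edge
`uv` and add a new vertex `w = Sum.inr ()` together with the edges `uw`, `wv`. -/
def subdivide {V : Type*} (G : SimpleGraph V) (u v : V) : SimpleGraph (V ⊕ Unit) :=
  SimpleGraph.fromEdgeSet
    ((Sym2.map Sum.inl '' (G.edgeSet \ {s(u, v)})) ∪
      {s(Sum.inl u, Sum.inr ()), s(Sum.inl v, Sum.inr ())})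

private lemma cutwidth_key {V : Type*} [Finite V] (G : SimpleGraph V) (u v : V)
    (huv : G.Adj u v) (W : ℕ) (f : V ≃ Fin (Nat.card V))
    (hf : ∀ i : ℕ,
      {e | e ∈ G.edgeSet ∧ ∃ a b, e = s(a, b) ∧ (f a : ℕ) ≤ i ∧ i < (f b : ℕ)}.ncard ≤ W)
    (hlt : (f u : ℕ) < (f v : ℕ)) :
    ∃ g : V ⊕ Unit ≃ Fin (Nat.card (V ⊕ Unit)), ∀ i : ℕ,
      {e | e ∈ (subdivide G u v).edgeSet ∧
        ∃ a b, e = s(a, b) ∧ (g a : ℕ) ≤ i ∧ i < (g b : ℕ)}.ncard ≤ W := by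
  classical
  haveI : Fintype V := Fintype.ofFinite V
  have hn : Nat.card (V ⊕ Unit) = Nat.card V + 1 := by
    simp [Nat.card_sum]
  -- the underlying numeric ordering
  set g0 : V ⊕ Unit → ℕ :=
    Sum.elim (fun x => if (f x : ℕ) ≤ (f u : ℕ) then (f x : ℕ) else (f x : ℕ) + 1)
      (fun _ => (f u : ℕ) + 1) with hg0
  have hg0lt : ∀ a, g0 a < Nat.card (V ⊕ Unit) := by
    intro a
    rw [hn]
    rcases a with x | x
    · have := (f x).isLt; simp only [hg0, Sum.elim_inl]; split_ifs <;> omega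
    · have := (f u).isLt; simp only [hg0, Sum.elim_inr]; omega
  set g1 : V ⊕ Unit → Fin (Nat.card (V ⊕ Unit)) := fun a => ⟨g0 a, hg0lt a⟩ with hg1
  have hval : ∀ x : V, ∀ y : V, (f x : ℕ) = (f y : ℕ) → x = y := by
    intro x y h
    exact f.injective (Fin.val_injective h)
  have hinj : Function.Injective g1 := by
    intro a b hab
    have hab' : g0 a = g0 b := congrArg Fin.val hab
    rcases a with x | x <;> rcases b with y | y
    · simp only [hg0, Sum.elim_inl] at hab'
      have : (f x : ℕ) = (f y : ℕ) := by split_ifs at hab' <;> omega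
      rw [hval x y this]
    · exfalso
      simp only [hg0, Sum.elim_inl, Sum.elim_inr] at hab'
      have : (f x : ℕ) = (f u : ℕ) := by split_ifs at hab' <;> omega
      split_ifs at hab' <;> omega
    · exfalso
      simp only [hg0, Sum.elim_inl, Sum.elim_inr] at hab'
      have : (f y : ℕ) = (f u : ℕ) := by split_ifs at hab' <;> omega
      split_ifs at hab' <;> omega
    · rcases x; rcases y; rfl
  have hbij : Function.Bijective g1 := by
    rw [Fintype.bijective_iff_injective_and_card]
    refine ⟨hinj, ?_⟩
    rw [Fintype.card_fin, ← Nat.card_eq_fintype_card]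
  refine ⟨Equiv.ofBijective g1 hbij, ?_⟩
  intro i
  have hg : ∀ a, ((Equiv.ofBijective g1 hbij) a : ℕ) = g0 a := fun a => rfl
  -- the corresponding cut in the old ordering
  set σ : ℕ := if i ≤ (f u : ℕ) then i else i - 1 with hσ
  set h0 : V ⊕ Unit → V := Sum.elim id (fun _ => v) with hh0
  set φ : Sym2 (V ⊕ Unit) → Sym2 V :=
    fun e => if e = s(Sum.inl v, Sum.inr ()) then s(u, v) else Sym2.map h0 e with hφ
  set T : Set (Sym2 V) :=
    {e | e ∈ G.edgeSet ∧ ∃ a b, e = s(a, b) ∧ (f a : ℕ) ≤ σ ∧ σ < (f b : ℕ)} with hT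
  have huvne : u ≠ v := huv.ne
  have hclass : ∀ e ∈ {e | e ∈ (subdivide G u v).edgeSet ∧
      ∃ a b, e = s(a, b) ∧ ((Equiv.ofBijective g1 hbij) a : ℕ) ≤ i ∧
        i < ((Equiv.ofBijective g1 hbij) b : ℕ)},
      φ e ∈ T ∧
      ((e = s(Sum.inl u, Sum.inr ()) ∧ i = (f u : ℕ) ∧ φ e = s(u, v)) ∨
       (e = s(Sum.inl v, Sum.inr ()) ∧ (f u : ℕ) + 1 ≤ i ∧ φ e = s(u, v)) ∨
       (∃ e0, e = Sym2.map Sum.inl e0 ∧ φ e = e0 ∧ e0 ≠ s(u, v))) := by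
    rintro e ⟨hedge, a, b, heab, ha, hb⟩
    rw [hg] at ha hb
    rw [subdivide, SimpleGraph.edgeSet_fromEdgeSet] at hedge
    obtain ⟨hmem, -⟩ := hedge
    simp only [Set.mem_union, Set.mem_image, Set.mem_insert_iff,
      Set.mem_singleton_iff, Set.mem_diff] at hmem
    rcases hmem with ⟨e0, ⟨he0G, he0ne⟩, rfl⟩ | (rfl | rfl)
    · -- an old edge, other than uv
      have hnotv : Sym2.map Sum.inl e0 ≠ s(Sum.inl v, Sum.inr ()) := by
        intro h
        have : (Sum.inr () : V ⊕ Unit) ∈ Sym2.map Sum.inl e0 := by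
          rw [h]; exact Sym2.mem_mk_right _ _
        obtain ⟨x, -, hx⟩ := Sym2.mem_map.mp this
        exact absurd hx (by simp)
      have hφe : φ (Sym2.map Sum.inl e0) = e0 := by
        rw [hφ]
        simp only [if_neg hnotv]
        rw [Sym2.map_map]
        have : h0 ∘ Sum.inl = id := by funext x; rfl
        rw [this, Sym2.map_id, id]
      -- find the endpoints
      have hamem : a ∈ Sym2.map Sum.inl e0 := by rw [heab]; exact Sym2.mem_mk_left _ _
      have hbmem : b ∈ Sym2.map Sum.inl e0 := by rw [heab]; exact Sym2.mem_mk_right _ _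
      obtain ⟨x, -, hxa⟩ := Sym2.mem_map.mp hamem
      obtain ⟨y, -, hyb⟩ := Sym2.mem_map.mp hbmem
      have he0 : e0 = s(x, y) := by
        apply Sym2.map.injective (Sum.inl_injective (α := V) (β := Unit))
        rw [heab, Sym2.map_pair_eq, hxa, hyb]
      subst hxa hyb
      have ha' : (if (f x : ℕ) ≤ (f u : ℕ) then (f x : ℕ) else (f x : ℕ) + 1) ≤ i := ha
      have hb' : i < (if (f y : ℕ) ≤ (f u : ℕ) then (f y : ℕ) else (f y : ℕ) + 1) := hb
      have hcross : (f x : ℕ) ≤ σ ∧ σ < (f y : ℕ) := by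
        rw [hσ]; constructor <;> split_ifs at ha' hb' ⊢ <;> omega
      refine ⟨?_, Or.inr (Or.inr ⟨e0, rfl, hφe, he0ne⟩)⟩
      rw [hφe, hT]
      exact ⟨he0G, x, y, he0, hcross.1, hcross.2⟩
    · -- the edge u–w
      have hne' : s(Sum.inl u, (Sum.inr () : V ⊕ Unit)) ≠ s(Sum.inl v, Sum.inr ()) := by
        intro h
        rcases Sym2.eq_iff.mp h with ⟨h1, -⟩ | ⟨h1, -⟩
        · exact huvne (Sum.inl_injective h1)
        · exact absurd h1 (by simp)
      have hφe : φ s(Sum.inl u, (Sum.inr () : V ⊕ Unit)) = s(u, v) := by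
        rw [hφ]; simp only [if_neg hne']
        rw [Sym2.map_pair_eq]; rfl
      rcases Sym2.eq_iff.mp heab.symm with ⟨rfl, rfl⟩ | ⟨h1, h2⟩
      · have ha' : (f u : ℕ) ≤ i := by simpa [hg0] using ha
        have hb' : i < (f u : ℕ) + 1 := hb
        have hi : i = (f u : ℕ) := by omega
        have hσi : σ = (f u : ℕ) := by rw [hσ]; simp [hi]
        refine ⟨?_, Or.inl ⟨rfl, hi, hφe⟩⟩
        rw [hφe, hT]
        exact ⟨huv, u, v, rfl, by omega, by omega⟩
      · exfalso
        subst h1; subst h2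
        have ha' : (f u : ℕ) + 1 ≤ i := ha
        have hb' : i < (if (f u : ℕ) ≤ (f u : ℕ) then (f u : ℕ) else (f u : ℕ) + 1) := hb
        rw [if_pos le_rfl] at hb'
        omega
    · -- the edge w–v
      have hφe : φ s(Sum.inl v, (Sum.inr () : V ⊕ Unit)) = s(u, v) := by
        rw [hφ]; simp
      rcases Sym2.eq_iff.mp heab.symm with ⟨rfl, rfl⟩ | ⟨h1, h2⟩
      · exfalso
        have ha' : (if (f v : ℕ) ≤ (f u : ℕ) then (f v : ℕ) else (f v : ℕ) + 1) ≤ i := ha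
        have hb' : i < (f u : ℕ) + 1 := hb
        rw [if_neg (by omega)] at ha'
        omega
      · subst h1; subst h2
        have ha' : (f u : ℕ) + 1 ≤ i := ha
        have hb' : i < (if (f v : ℕ) ≤ (f u : ℕ) then (f v : ℕ) else (f v : ℕ) + 1) := hb
        rw [if_neg (by omega)] at hb'
        have hσi : σ = i - 1 := by rw [hσ]; rw [if_neg (by omega)]
        refine ⟨?_, Or.inr (Or.inl ⟨rfl, ha', hφe⟩)⟩
        rw [hφe, hT]
        exact ⟨huv, u, v, rfl, by omega, by omega⟩
  refine le_trans (Set.ncard_le_ncard_of_injOn φ (fun e he => (hclass e he).1) ?_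
    (Set.toFinite _)) (hf σ)
  intro e1 h1 e2 h2 hφeq
  rcases (hclass e1 h1).2 with ⟨rfl, hi1, hφ1⟩ | ⟨rfl, hi1, hφ1⟩ | ⟨e01, rfl, hφ1, hne1⟩ <;>
    rcases (hclass e2 h2).2 with ⟨rfl, hi2, hφ2⟩ | ⟨rfl, hi2, hφ2⟩ | ⟨e02, rfl, hφ2, hne2⟩
  · rfl
  · omega
  · exact absurd (by rw [← hφ2, ← hφeq, hφ1]) hne2.symm
  · omega
  · rfl
  · exact absurd (by rw [← hφ2, ← hφeq, hφ1]) hne2.symm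
  · exact absurd (by rw [← hφ1, hφeq, hφ2]) hne1.symm
  · exact absurd (by rw [← hφ1, hφeq, hφ2]) hne1.symm
  · rw [hφ1, hφ2] at hφeq
    rw [hφeq]

/-- Subdividing an edge does not increase the cutwidth. -/
theorem cutwidth_subdivide_le {V : Type*} [Finite V] (G : SimpleGraph V)
    (u v : V) (huv : G.Adj u v) :
    cutwidth (subdivide G u v) ≤ cutwidth G := by
  have hne : {w | ∃ f : V ≃ Fin (Nat.card V), ∀ i : ℕ,
      {e | e ∈ G.edgeSet ∧ ∃ a b, e = s(a, b) ∧ (f a : ℕ) ≤ i ∧ i < (f b : ℕ)}.ncard ≤ w}.Nonempty := by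
    refine ⟨Nat.card (Sym2 V), Finite.equivFin V, fun i => ?_⟩
    calc _ ≤ (Set.univ : Set (Sym2 V)).ncard :=
          Set.ncard_le_ncard (Set.subset_univ _) (Set.toFinite _)
      _ = Nat.card (Sym2 V) := Set.ncard_univ _
  have hmem := Nat.sInf_mem hne
  obtain ⟨f, hf⟩ := hmem
  have hfne : (f u : ℕ) ≠ (f v : ℕ) := by
    intro h
    exact huv.ne (f.injective (Fin.val_injective h))
  rcases lt_or_gt_of_ne hfne with hlt | hgt
  · obtain ⟨g, hg⟩ := cutwidth_key G u v huv (cutwidth G) f hf hlt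
    exact Nat.sInf_le ⟨g, hg⟩
  · have hsub : subdivide G u v = subdivide G v u := by
      rw [subdivide, subdivide, show s(u, v) = s(v, u) from Sym2.eq_swap, Set.pair_comm]
    obtain ⟨g, hg⟩ := cutwidth_key G v u huv.symm (cutwidth G) f hf hgt
    rw [hsub]
    exact Nat.sInf_le ⟨g, hg⟩
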